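/- Let H be a Hilbert space, φ a bounded finite potent endomorphism, and λ ∈ ℂ nonzero. Then for every n ∈ ℕ, Ker((φ − λ·Id)ⁿ) = Ker((φ|_{W_φ} − λ·Id)ⁿ); in particular the algebraic multiplicity of λ as an eigenvalue of φ equals its algebraic multiplicity as an eigenvalue of φ|_{W_φ}. -/

import Mathlib

/-- For nonzero `μ` and every `n`, `Ker (φ - μ·Id)ⁿ = Ker (φ|_{W_φ} - μ·Id)ⁿ` (viewed
inside `H`); in particular the algebraic multiplicities of `μ` for `φ` and for
`φ|_{W_φ}` agree. -/
theorem generalized_eigenspace_eq_restrict {H : Type*} [NormedAddCommGroup H]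
    [InnerProductSpace ℂ H] [CompleteSpace H]
    (φ : H →L[ℂ] H)
    (hfp : ∃ n : ℕ, FiniteDimensional ℂ (LinearMap.range (φ.toLinearMap ^ n)))
    (W U : Submodule ℂ H) (hWU : IsCompl W U) [FiniteDimensional ℂ W]
    (hW : ∀ x ∈ W, φ.toLinearMap x ∈ W) (hU : ∀ x ∈ U, φ.toLinearMap x ∈ U)
    (hWa : Function.Bijective (φ.toLinearMap.restrict hW))
    (hUn : IsNilpotent (φ.toLinearMap.restrict hU))
    (μ : ℂ) (hμ : μ ≠ 0) :
    (∀ n : ℕ, LinearMap.ker ((φ.toLinearMap - μ • 1) ^ n) =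
      Submodule.map W.subtype
        (LinearMap.ker ((φ.toLinearMap.restrict hW - μ • 1) ^ n))) ∧
    Module.finrank ℂ ↥(⨆ n : ℕ, LinearMap.ker ((φ.toLinearMap - μ • 1) ^ n)) =
      Module.finrank ℂ
        ↥(⨆ n : ℕ, LinearMap.ker ((φ.toLinearMap.restrict hW - μ • 1) ^ n)) := by
  set ψ := φ.toLinearMap with hψ
  set f : H →ₗ[ℂ] H := ψ - μ • 1 with hf
  have hWf : ∀ x ∈ W, f x ∈ W := by
    intro x hx
    have : f x = ψ x - μ • x := by simp [hf]
    rw [this]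
    exact W.sub_mem (hW x hx) (W.smul_mem μ hx)
  have hUf : ∀ x ∈ U, f x ∈ U := by
    intro x hx
    have : f x = ψ x - μ • x := by simp [hf]
    rw [this]
    exact U.sub_mem (hU x hx) (U.smul_mem μ hx)
  have hresW : ψ.restrict hW - μ • 1 = f.restrict hWf := by
    ext x
    simp [LinearMap.restrict_apply, hf]
  have hresU : ψ.restrict hU - μ • 1 = f.restrict hUf := by
    ext x
    simp [LinearMap.restrict_apply, hf]
  -- the restriction of `f` to `U` is a unit (nilpotent minus nonzero scalar)
  have hUunit : IsUnit (f.restrict hUf) := by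
    rw [← hresU]
    have h1 : IsUnit (μ⁻¹ • (ψ.restrict hU) - 1) :=
      (hUn.smul μ⁻¹).isUnit_sub_one
    have h2 : IsUnit ((μ • 1 : Module.End ℂ U)) := by
      have : (μ • 1 : Module.End ℂ U) = algebraMap ℂ (Module.End ℂ U) μ := by
        simp [Algebra.algebraMap_eq_smul_one]
      rw [this]
      exact (hμ.isUnit).map (algebraMap ℂ (Module.End ℂ U))
    have key : (μ • 1 : Module.End ℂ U) * (μ⁻¹ • (ψ.restrict hU) - 1) =
        ψ.restrict hU - μ • 1 := by
      rw [mul_sub, mul_one, smul_mul_assoc, one_mul, smul_smul,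
        mul_inv_cancel₀ hμ, one_smul]
    rw [← key]
    exact h2.mul h1
  have hUinj : ∀ n : ℕ, Function.Injective ((f.restrict hUf) ^ n) := fun n =>
    ((Module.End.isUnit_iff _).mp (hUunit.pow n)).injective
  -- part 1
  have h1 : ∀ n : ℕ, LinearMap.ker (f ^ n) =
      Submodule.map W.subtype (LinearMap.ker ((ψ.restrict hW - μ • 1) ^ n)) := by
    intro n
    rw [hresW, Module.End.pow_restrict n hWf]
    apply le_antisymm
    · intro x hx
      rw [LinearMap.mem_ker] at hx
      have hxmem : x ∈ W ⊔ U := by rw [hWU.sup_eq_top]; trivial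
      obtain ⟨w, hw, u, hu, rfl⟩ := Submodule.mem_sup.mp hxmem
      have hfw : (f ^ n) w ∈ W := Module.End.pow_apply_mem_of_forall_mem n hWf w hw
      have hfu : (f ^ n) u ∈ U := Module.End.pow_apply_mem_of_forall_mem n hUf u hu
      have hsum : (f ^ n) w + (f ^ n) u = 0 := by rw [← map_add]; exact hx
      have hw0 : (f ^ n) w = 0 := by
        have hmem : (f ^ n) w ∈ W ⊓ U := by
          refine ⟨hfw, ?_⟩
          have : (f ^ n) w = -((f ^ n) u) := eq_neg_of_add_eq_zero_left hsum
          rw [this]; exact U.neg_mem hfu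
        rw [hWU.inf_eq_bot] at hmem
        exact hmem
      have hu0' : (f ^ n) u = 0 := by rwa [hw0, zero_add] at hsum
      have hu0 : u = 0 := by
        have hz : ((f.restrict hUf) ^ n) ⟨u, hu⟩ = 0 := by
          rw [Module.End.pow_restrict n hUf]
          apply Subtype.ext
          simpa [LinearMap.restrict_apply] using hu0'
        have hz0 : (f.restrict hUf ^ n) (⟨u, hu⟩ : U) = (f.restrict hUf ^ n) 0 := by
          rw [hz, map_zero]
        have h0 : (⟨u, hu⟩ : U) = 0 := hUinj n hz0
        exact congrArg Subtype.val h0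
      refine ⟨⟨w, hw⟩, ?_, by simp [hu0]⟩
      exact LinearMap.mem_ker.mpr
        (Subtype.ext (by simpa [LinearMap.restrict_apply] using hw0))
    · rintro x ⟨y, hy, rfl⟩
      rw [LinearMap.mem_ker]
      have := congrArg (Subtype.val) hy
      simpa [LinearMap.restrict_apply] using this
  refine ⟨h1, ?_⟩
  rw [iSup_congr h1, ← Submodule.map_iSup]
  exact ((Submodule.equivMapOfInjective W.subtype W.injective_subtype _).symm).finrank_eq
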